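/- Suppose f ∈ C²(ℝ^d), f(0) = 0, ∇f(0) = 0, and H := ∇²f(0) is non-degenerate (all eigenvalues nonzero), has at least one negative eigenvalue, and has at least one positive eigenvalue. Let f^H(x) := (1/2) xᵀHx. Let 0 < ρ < 1 and 0 < ρ^H < ρ/4, and set U₂^H := ⋃_{x : f^H(x)=0} B(x, ρ^H‖x‖) and U₂ := ⋃_{x : f(x)=0} B(x, ρ‖x‖). Then there exists a neighborhood U' of 0 such that U₂^H ∩ U' ⊆ U₂ ∩ U'. -/

import Mathlib

open Filter Topology RealInnerProductSpace

noncomputable section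

/-- The Hessian `∇²f(x)` of `f` at `x`, as a continuous linear map. -/
def hess (d : ℕ) (f : EuclideanSpace ℝ (Fin d) → ℝ) (x : EuclideanSpace ℝ (Fin d)) :
    EuclideanSpace ℝ (Fin d) →L[ℝ] EuclideanSpace ℝ (Fin d) :=
  fderiv ℝ (gradient f) x

/-- The quadratic form `f^H(x) = (1/2) xᵀ H x` associated with the Hessian `H = ∇²f(0)`. -/
def hessQuadForm (d : ℕ) (f : EuclideanSpace ℝ (Fin d) → ℝ) (x : EuclideanSpace ℝ (Fin d)) : ℝ :=
  (1 / 2 : ℝ) * ⟪hess d f 0 x, x⟫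

/-- The duality isometry, with the real (non-star) ring hom. -/
def isoD (d : ℕ) : StrongDual ℝ (EuclideanSpace ℝ (Fin d)) ≃ₗᵢ[ℝ] EuclideanSpace ℝ (Fin d) :=
  (InnerProductSpace.toDual ℝ _).symm

theorem hess_inner {d : ℕ} (f : EuclideanSpace ℝ (Fin d) → ℝ) (v w : EuclideanSpace ℝ (Fin d)) :
    ⟪hess d f 0 v, w⟫ = fderiv ℝ (fderiv ℝ f) 0 v w := by
  have h : hess d f 0
      = ((isoD d).toContinuousLinearEquiv : _ →L[ℝ] _).comp (fderiv ℝ (fderiv ℝ f) 0) := by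
    rw [hess]
    have hg : gradient f = fun x => isoD d (fderiv ℝ f x) := rfl
    rw [hg]
    exact (isoD d).comp_fderiv
  rw [h]
  exact InnerProductSpace.toDual_symm_apply

set_option maxHeartbeats 1000000 in
/-- Near `0`, the conic neighborhood `U₂^H` of the zero set of the quadratic form
`f^H = (1/2) xᵀ(∇²f(0))x` (with aperture `ρ^H < ρ/4`) is contained in the corresponding
neighborhood `U₂` of the zero set of `f` (with aperture `ρ`). -/
theorem quad_cone_subset_cone
    {d : ℕ} (f : EuclideanSpace ℝ (Fin d) → ℝ)
    (hf : ContDiff ℝ 2 f)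
    (hf0 : f 0 = 0) (hcrit : gradient f 0 = 0)
    (hnd : ∀ μ : ℝ, Module.End.HasEigenvalue (hess d f 0).toLinearMap μ → μ ≠ 0)
    (hneg : ∃ μ < (0 : ℝ), Module.End.HasEigenvalue (hess d f 0).toLinearMap μ)
    (hpos : ∃ μ > (0 : ℝ), Module.End.HasEigenvalue (hess d f 0).toLinearMap μ)
    (ρ ρH : ℝ) (hρ0 : 0 < ρ) (hρ1 : ρ < 1) (hρH0 : 0 < ρH) (hρH : ρH < ρ / 4) :
    ∃ U' ∈ 𝓝 (0 : EuclideanSpace ℝ (Fin d)),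
      (⋃ y ∈ {y : EuclideanSpace ℝ (Fin d) | hessQuadForm d f y = 0},
          Metric.ball y (ρH * ‖y‖)) ∩ U' ⊆
      (⋃ y ∈ {y : EuclideanSpace ℝ (Fin d) | f y = 0}, Metric.ball y (ρ * ‖y‖)) ∩ U' := by
  classical
  set H := hess d f 0 with hHdef
  set f'' := fderiv ℝ (fderiv ℝ f) 0 with hf''def
  have hB : ∀ v w, ⟪H v, w⟫ = f'' v w := fun v w => hess_inner f v w
  have hsymm2 : ∀ v w, f'' v w = f'' w v := fun v w =>
    (hf.contDiffAt.isSymmSndFDerivAt (by simp)) v w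
  have hsymm : ∀ v w : EuclideanSpace ℝ (Fin d), ⟪H v, w⟫ = ⟪H w, v⟫ := fun v w => by
    rw [hB, hB, hsymm2]
  have hfd : Differentiable ℝ f := hf.differentiable two_ne_zero
  have hfderiv0 : fderiv ℝ f 0 = 0 := by
    have h : (InnerProductSpace.toDual ℝ (EuclideanSpace ℝ (Fin d))).symm (fderiv ℝ f 0) = 0 :=
      hcrit
    have h2 := congrArg (InnerProductSpace.toDual ℝ (EuclideanSpace ℝ (Fin d))) h
    simpa using h2
  have hQdef : ∀ w : EuclideanSpace ℝ (Fin d), hessQuadForm d f w = (1 / 2 : ℝ) * ⟪H w, w⟫ :=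
    fun w => rfl
  -- derivative of the quadratic form
  have hfH : ∀ x, HasFDerivAt (hessQuadForm d f) (innerSL ℝ (H x)) x := by
    intro x
    have h1 := (H.hasFDerivAt (x := x)).inner ℝ (hasFDerivAt_id x)
    have h2 := h1.const_mul (1 / 2 : ℝ)
    have h3 : hessQuadForm d f = fun y => (1 / 2 : ℝ) * ⟪H y, id y⟫ := rfl
    rw [h3]
    refine h2.congr_fderiv ?_
    ext w
    have hs : ⟪H w, x⟫ = ⟪H x, w⟫ := hsymm w x
    simp [fderivInnerCLM_apply, hs]
    ring
  -- injectivity and coercivity of H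
  have hinj : Function.Injective H.toLinearMap := by
    rw [← LinearMap.ker_eq_bot]
    by_contra hker
    refine hnd 0 ?_ rfl
    rw [Module.End.hasEigenvalue_iff, Module.End.eigenspace_zero]
    exact hker
  have hbij : Function.Bijective H.toLinearMap :=
    ⟨hinj, LinearMap.injective_iff_surjective.mp hinj⟩
  obtain ⟨K, hK0, hK⟩ : ∃ K : ℝ, 0 ≤ K ∧
      ∀ x : EuclideanSpace ℝ (Fin d), ‖x‖ ≤ K * ‖H x‖ := by
    let eL := LinearEquiv.ofBijective H.toLinearMap hbij
    let eC := eL.toContinuousLinearEquiv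
    refine ⟨‖(eC.symm : EuclideanSpace ℝ (Fin d) →L[ℝ] EuclideanSpace ℝ (Fin d))‖,
      norm_nonneg _, fun x => ?_⟩
    have h1 : (eC.symm : EuclideanSpace ℝ (Fin d) →L[ℝ] EuclideanSpace ℝ (Fin d)) (H x) = x :=
      eC.symm_apply_apply x
    calc ‖x‖ = ‖(eC.symm : EuclideanSpace ℝ (Fin d) →L[ℝ] EuclideanSpace ℝ (Fin d)) (H x)‖ := by
          rw [h1]
      _ ≤ _ := ContinuousLinearMap.le_opNorm _ _
  have hf' : ContDiff ℝ 1 (fderiv ℝ f) := hf.fderiv_right (by norm_num)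
  have hf'diff0 : HasFDerivAt (fderiv ℝ f) f'' 0 := by
    rw [hf''def]
    exact (hf'.differentiable one_ne_zero 0).hasFDerivAt
  have hIeq : ∀ x : EuclideanSpace ℝ (Fin d),
      (innerSL ℝ (H x) : EuclideanSpace ℝ (Fin d) →L[ℝ] ℝ) = f'' x := by
    intro x; ext w; simpa using hB x w
  clear_value H f''
  clear hHdef hf''def hnd hneg hpos hcrit hinj hbij
  -- constants
  set lam : ℝ := 1 / (K + 1) with hlamdef
  have hKpos : (0 : ℝ) < K + 1 := by linarith
  have hlam0 : 0 < lam := by rw [hlamdef]; positivity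
  have hlamK : lam * (K + 1) = 1 := by rw [hlamdef]; field_simp
  clear_value lam
  have hlam : ∀ x : EuclideanSpace ℝ (Fin d), lam * ‖x‖ ≤ ‖H x‖ := by
    intro x
    calc lam * ‖x‖ ≤ lam * (K * ‖H x‖) := mul_le_mul_of_nonneg_left (hK x) hlam0.le
      _ ≤ lam * (K * ‖H x‖) + lam * ‖H x‖ := by
          linarith only [mul_nonneg hlam0.le (norm_nonneg (H x))]
      _ = (lam * (K + 1)) * ‖H x‖ := by ring
      _ = ‖H x‖ := by rw [hlamK, one_mul]
  set c : ℝ := min (ρ / 4) (lam / (‖H‖ + 1)) with hcdef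
  have hc0 : 0 < c := lt_min (by linarith) (by positivity)
  have hcρ : c ≤ ρ / 4 := min_le_left _ _
  have hc14 : c ≤ 1 / 4 := hcρ.trans (by linarith)
  have hcH : c * ‖H‖ ≤ lam := by
    have h1 : c ≤ lam / (‖H‖ + 1) := min_le_right _ _
    have h2 : (0 : ℝ) < ‖H‖ + 1 := by positivity
    have h3 : c * (‖H‖ + 1) ≤ lam := by
      rw [← div_mul_cancel₀ lam h2.ne']
      exact mul_le_mul_of_nonneg_right h1 h2.le
    linarith only [h3, hc0]
  clear_value c
  clear hcdef hlamdef hlamK hK hK0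
  set ε : ℝ := c * lam / (4 * (1 + c) ^ 2) with hεdef
  have h1c : (0 : ℝ) < 1 + c := by linarith
  have hε0 : 0 < ε := by
    rw [hεdef]
    exact div_pos (mul_pos hc0 hlam0) (mul_pos (by norm_num) (pow_pos h1c 2))
  have hεeq : ε * (1 + c) ^ 2 = c * lam / 4 := by
    rw [hεdef]
    field_simp
  clear_value ε
  clear hεdef
  -- second-order Taylor estimate
  have hPhi : HasFDerivAt (fun x => fderiv ℝ f x - f'' x)
      (0 : EuclideanSpace ℝ (Fin d) →L[ℝ] EuclideanSpace ℝ (Fin d) →L[ℝ] ℝ) 0 := by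
    have := hf'diff0.sub f''.hasFDerivAt
    rw [sub_self] at this
    exact this
  have ho : (fun x => fderiv ℝ f x - f'' x) =o[𝓝 (0 : EuclideanSpace ℝ (Fin d))] fun x => x := by
    have h := hasFDerivAt_iff_isLittleO_nhds_zero.mp hPhi
    simpa [hfderiv0] using h
  obtain ⟨δ₀, hδ₀pos, hδ₀⟩ : ∃ δ₀ > 0, ∀ x : EuclideanSpace ℝ (Fin d), ‖x‖ < δ₀ →
      ‖fderiv ℝ f x - f'' x‖ ≤ ε * ‖x‖ := by
    have h := ho.def hε0
    rw [Metric.eventually_nhds_iff] at h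
    obtain ⟨δ₀, hδ₀pos, hδ₀⟩ := h
    exact ⟨δ₀, hδ₀pos, fun x hx => by simpa using hδ₀ (by simpa [dist_zero_right] using hx)⟩
  have hQ0 : hessQuadForm d f 0 = 0 := by
    rw [hQdef, map_zero, inner_zero_left]
    ring
  have htaylor : ∀ w : EuclideanSpace ℝ (Fin d), ‖w‖ < δ₀ →
      |f w - hessQuadForm d f w| ≤ ε * ‖w‖ ^ 2 := by
    intro w hw
    set g : EuclideanSpace ℝ (Fin d) → ℝ := fun y => f y - hessQuadForm d f y with hgdef
    have hgderiv : ∀ x, HasFDerivAt g (fderiv ℝ f x - innerSL ℝ (H x)) x := fun x =>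
      (hfd x).hasFDerivAt.sub (hfH x)
    have hdiffOn : ∀ x ∈ Metric.closedBall (0 : EuclideanSpace ℝ (Fin d)) ‖w‖,
        DifferentiableAt ℝ g x := fun x _ => (hgderiv x).differentiableAt
    have hbound : ∀ x ∈ Metric.closedBall (0 : EuclideanSpace ℝ (Fin d)) ‖w‖,
        ‖fderiv ℝ g x‖ ≤ ε * ‖w‖ := by
      intro x hx
      have hxw : ‖x‖ ≤ ‖w‖ := by simpa [dist_zero_right] using hx
      have h1 : fderiv ℝ g x = fderiv ℝ f x - innerSL ℝ (H x) := (hgderiv x).fderiv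
      rw [h1, hIeq x]
      calc ‖fderiv ℝ f x - f'' x‖ ≤ ε * ‖x‖ := hδ₀ x (lt_of_le_of_lt hxw hw)
        _ ≤ ε * ‖w‖ := mul_le_mul_of_nonneg_left hxw hε0.le
    have hw0 : (0 : EuclideanSpace ℝ (Fin d))
        ∈ Metric.closedBall (0 : EuclideanSpace ℝ (Fin d)) ‖w‖ :=
      Metric.mem_closedBall_self (norm_nonneg w)
    have hww : w ∈ Metric.closedBall (0 : EuclideanSpace ℝ (Fin d)) ‖w‖ :=
      Metric.mem_closedBall.mpr (by simp [dist_zero_right])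
    have hmv := (convex_closedBall (0 : EuclideanSpace ℝ (Fin d))
      ‖w‖).norm_image_sub_le_of_norm_fderiv_le hdiffOn hbound hw0 hww
    have hg0 : g 0 = 0 := by rw [hgdef]; simp only; rw [hf0, hQ0]; ring
    rw [hg0, sub_zero, sub_zero] at hmv
    calc |f w - hessQuadForm d f w| = ‖g w‖ := rfl
      _ ≤ ε * ‖w‖ * ‖w‖ := hmv
      _ = ε * ‖w‖ ^ 2 := by ring
  clear hfH hPhi ho hf'diff0 hIeq hfderiv0
  -- main argument
  refine ⟨Metric.ball 0 (δ₀ / 4), Metric.ball_mem_nhds _ (by positivity), ?_⟩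
  rintro z ⟨hz1, hz2⟩
  refine ⟨?_, hz2⟩
  rw [Set.mem_iUnion₂] at hz1
  obtain ⟨x, hx0, hzx⟩ := hz1
  have hx0' : hessQuadForm d f x = 0 := hx0
  rw [Metric.mem_ball, dist_eq_norm] at hzx
  have hzn : ‖z‖ < δ₀ / 4 := by
    have h := hz2
    rw [Metric.mem_ball, dist_zero_right] at h
    exact h
  have hxpos : 0 < ‖x‖ := by
    have h0 : 0 < ρH * ‖x‖ := lt_of_le_of_lt (norm_nonneg _) hzx
    rcases mul_pos_iff.mp h0 with h | h
    · exact h.2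
    · linarith only [h.1, hρH0]
  have hxz : ‖x‖ < δ₀ / 3 := by
    have h1 : ‖x‖ ≤ ‖x - z‖ + ‖z‖ := by
      calc ‖x‖ = ‖(x - z) + z‖ := by rw [sub_add_cancel]
        _ ≤ ‖x - z‖ + ‖z‖ := norm_add_le _ _
    have h2 : ‖x - z‖ = ‖z - x‖ := norm_sub_rev _ _
    have h3 : ρH * ‖x‖ ≤ (1 / 4) * ‖x‖ :=
      mul_le_mul_of_nonneg_right (by linarith only [hρH, hρ1] : ρH ≤ 1 / 4) (norm_nonneg x)
    linarith only [h1, h2, h3, hzx, hzn]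
  have hHx0 : 0 < ‖H x‖ := lt_of_lt_of_le (mul_pos hlam0 hxpos) (hlam x)
  set u : EuclideanSpace ℝ (Fin d) := ‖H x‖⁻¹ • H x with hudef
  have hu : ‖u‖ = 1 := by
    rw [hudef, norm_smul, norm_inv, norm_norm]
    field_simp
  have hHxu : ⟪H x, u⟫ = ‖H x‖ := by
    rw [hudef, real_inner_smul_right, real_inner_self_eq_norm_sq]
    field_simp
  have hHuu : |⟪H u, u⟫| ≤ ‖H‖ := by
    calc |⟪H u, u⟫| ≤ ‖H u‖ * ‖u‖ := abs_real_inner_le_norm _ _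
      _ ≤ ‖H‖ * ‖u‖ * ‖u‖ := mul_le_mul_of_nonneg_right (H.le_opNorm u) (norm_nonneg _)
      _ = ‖H‖ := by rw [hu]; ring
  have hxx0 : ⟪H x, x⟫ = 0 := by
    rw [hQdef] at hx0'
    linarith only [hx0']
  have hexp : ∀ t : ℝ, hessQuadForm d f (x + t • u)
      = t * ‖H x‖ + t ^ 2 / 2 * ⟪H u, u⟫ := by
    intro t
    rw [hQdef, map_add, map_smul]
    simp only [inner_add_left, inner_add_right, real_inner_smul_left, real_inner_smul_right]
    rw [hxx0, hsymm u x, hHxu]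
    ring
  clear_value u
  set T : ℝ := c * ‖x‖ with hTdef
  have hT0 : 0 < T := mul_pos hc0 hxpos
  clear_value T
  have hwle : ∀ t : ℝ, |t| ≤ T → ‖x + t • u‖ ≤ (1 + c) * ‖x‖ := by
    intro t ht
    rw [hTdef] at ht
    calc ‖x + t • u‖ ≤ ‖x‖ + ‖t • u‖ := norm_add_le _ _
      _ = ‖x‖ + |t| := by rw [norm_smul, hu, Real.norm_eq_abs, mul_one]
      _ ≤ ‖x‖ + c * ‖x‖ := by linarith only [ht]
      _ = (1 + c) * ‖x‖ := by ring
  have hwδ : ∀ t : ℝ, |t| ≤ T → ‖x + t • u‖ < δ₀ := by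
    intro t ht
    have h1 := hwle t ht
    have h2 : c * ‖x‖ ≤ (1 / 4) * ‖x‖ := mul_le_mul_of_nonneg_right hc14 (norm_nonneg x)
    linarith only [h1, h2, hxz, hδ₀pos]
  have habs := abs_le.mp hHuu
  have hTabs : |T| ≤ T := by rw [abs_of_pos hT0]
  have hmTabs : |(-T)| ≤ T := by rw [abs_neg, abs_of_pos hT0]
  have k1 : c * lam * ‖x‖ ^ 2 ≤ T * ‖H x‖ := by
    calc c * lam * ‖x‖ ^ 2 = (c * ‖x‖) * (lam * ‖x‖) := by ring
      _ ≤ (c * ‖x‖) * ‖H x‖ :=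
          mul_le_mul_of_nonneg_left (hlam x) (mul_pos hc0 hxpos).le
      _ = T * ‖H x‖ := by rw [hTdef]
  have k2 : T ^ 2 / 2 * ‖H‖ ≤ (c * lam / 2) * ‖x‖ ^ 2 := by
    have hT2 : T ^ 2 = c ^ 2 * ‖x‖ ^ 2 := by rw [hTdef]; ring
    have h4 : (c * ‖H‖) * (c * ‖x‖ ^ 2) ≤ lam * (c * ‖x‖ ^ 2) :=
      mul_le_mul_of_nonneg_right hcH (mul_nonneg hc0.le (sq_nonneg ‖x‖))
    rw [hT2]
    linarith only [h4]
  have hprod1 : (0 : ℝ) ≤ T ^ 2 / 2 * (⟪H u, u⟫ + ‖H‖) :=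
    mul_nonneg (by positivity) (by linarith only [habs.1])
  have hprod2 : (0 : ℝ) ≤ T ^ 2 / 2 * (‖H‖ - ⟪H u, u⟫) :=
    mul_nonneg (by positivity) (by linarith only [habs.2])
  have hQT : (c * lam / 2) * ‖x‖ ^ 2 ≤ hessQuadForm d f (x + T • u) := by
    rw [hexp T]
    nlinarith [k1, k2, hprod1]
  have hQmT : hessQuadForm d f (x + (-T) • u) ≤ -((c * lam / 2) * ‖x‖ ^ 2) := by
    rw [hexp (-T)]
    nlinarith [k1, k2, hprod2]
  have hsqle : ∀ t : ℝ, |t| ≤ T → ε * ‖x + t • u‖ ^ 2 ≤ c * lam / 4 * ‖x‖ ^ 2 := by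
    intro t ht
    have h1 := hwle t ht
    have hsq : ‖x + t • u‖ ^ 2 ≤ ((1 + c) * ‖x‖) ^ 2 :=
      pow_le_pow_left₀ (norm_nonneg _) h1 2
    have h2 : ε * ‖x + t • u‖ ^ 2 ≤ ε * ((1 + c) * ‖x‖) ^ 2 :=
      mul_le_mul_of_nonneg_left hsq hε0.le
    have h3 : ε * ((1 + c) * ‖x‖) ^ 2 = c * lam / 4 * ‖x‖ ^ 2 := by
      linear_combination (‖x‖ ^ 2) * hεeq
    linarith only [h2, h3]
  have hclx : 0 < c * lam / 4 * ‖x‖ ^ 2 := by positivity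
  have hfT : 0 < f (x + T • u) := by
    have hta := htaylor _ (hwδ T hTabs)
    have h1 := (abs_le.mp hta).1
    have h2 := hsqle T hTabs
    linarith only [h1, h2, hQT, hclx]
  have hfmT : f (x + (-T) • u) < 0 := by
    have hta := htaylor _ (hwδ (-T) hmTabs)
    have h1 := (abs_le.mp hta).2
    have h2 := hsqle (-T) hmTabs
    linarith only [h1, h2, hQmT, hclx]
  have hcont : ContinuousOn (fun t : ℝ => f (x + t • u)) (Set.Icc (-T) T) :=
    (hf.continuous.comp (continuous_const.add (continuous_id.smul continuous_const))).continuousOn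
  have hmem : (0 : ℝ) ∈ Set.Icc ((fun t : ℝ => f (x + t • u)) (-T))
      ((fun t : ℝ => f (x + t • u)) T) := ⟨le_of_lt hfmT, le_of_lt hfT⟩
  obtain ⟨t₀, ht₀mem, ht₀⟩ := intermediate_value_Icc (by linarith only [hT0] : -T ≤ T) hcont hmem
  set y := x + t₀ • u with hydef
  have hyzero : f y = 0 := ht₀
  have ht₀abs : |t₀| ≤ T := abs_le.mpr ⟨ht₀mem.1, ht₀mem.2⟩
  have hyx : ‖y - x‖ ≤ T := by
    rw [hydef]
    have h : x + t₀ • u - x = t₀ • u := by abel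
    rw [h, norm_smul, hu, Real.norm_eq_abs, mul_one]
    exact ht₀abs
  clear_value y
  have hzy : ‖z - y‖ < (ρ / 2) * ‖x‖ := by
    have h1 : ‖z - y‖ ≤ ‖z - x‖ + ‖x - y‖ := by
      calc ‖z - y‖ = ‖(z - x) + (x - y)‖ := by rw [sub_add_sub_cancel]
        _ ≤ ‖z - x‖ + ‖x - y‖ := norm_add_le _ _
    have h2 : ‖x - y‖ = ‖y - x‖ := norm_sub_rev _ _
    have h3 : T ≤ (ρ / 4) * ‖x‖ := by
      rw [hTdef]
      exact mul_le_mul_of_nonneg_right hcρ (norm_nonneg x)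
    have h4 : ρH * ‖x‖ < (ρ / 4) * ‖x‖ := mul_lt_mul_of_pos_right hρH hxpos
    linarith only [h1, h2, h3, h4, hzx, hyx]
  have hynorm : (3 / 4) * ‖x‖ ≤ ‖y‖ := by
    have h1 : ‖x‖ - ‖y‖ ≤ ‖x - y‖ := norm_sub_norm_le x y
    have h2 : ‖x - y‖ = ‖y - x‖ := norm_sub_rev _ _
    have h3 : T ≤ (1 / 4) * ‖x‖ := by
      rw [hTdef]
      exact mul_le_mul_of_nonneg_right hc14 (norm_nonneg x)
    linarith only [h1, h2, h3, hyx]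
  have hfinal : ‖z - y‖ < ρ * ‖y‖ := by
    have h1 : ρ * ((3 / 4) * ‖x‖) ≤ ρ * ‖y‖ := mul_le_mul_of_nonneg_left hynorm hρ0.le
    have h2 : 0 < ρ * ‖x‖ := mul_pos hρ0 hxpos
    linarith only [h1, h2, hzy]
  rw [Set.mem_iUnion₂]
  refine ⟨y, hyzero, ?_⟩
  rw [Metric.mem_ball, dist_eq_norm]
  exact hfinal
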